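/- Let A be an n-by-n weighted shift matrix (n ≥ 2) with weights a_1, …, a_{n−1}, 0, where a_j ≠ 0 for all 1 ≤ j ≤ n−1 (exactly one zero weight, in the last position). Then A is irreducible: the only subspaces of ℂ^n invariant under both A and A* are {0} and ℂ^n. -/

import Mathlib

open Matrix

/-- The n-by-n weighted shift matrix with weights `a 0, …, a (n-1)`
(representing `a_1, …, a_n`): the `(i, i+1)` entry is `a i` (cyclically). -/
def wsMatrix {n : ℕ} (a : Fin n → ℂ) : Matrix (Fin n) (Fin n) ℂ :=
  fun i j => if (j : ℕ) = ((i : ℕ) + 1) % n then a i else 0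

/-- Two square complex matrices are unitarily equivalent if `B = U* A U`
for some unitary `U`. -/
def UnitarilyEquiv {n : ℕ} (A B : Matrix (Fin n) (Fin n) ℂ) : Prop :=
  ∃ U : Matrix (Fin n) (Fin n) ℂ, U ∈ Matrix.unitaryGroup (Fin n) ℂ ∧ B = Uᴴ * A * U

theorem stmt12 (n : ℕ) (hn : 2 ≤ n) (a : Fin n → ℂ)
    (ha : ∀ i : Fin n, (i : ℕ) + 1 < n → a i ≠ 0)
    (A : Matrix (Fin n) (Fin n) ℂ)
    (hA : A = wsMatrix fun i => if (i : ℕ) + 1 < n then a i else 0)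
    (M : Submodule ℂ (Fin n → ℂ))
    (hM1 : ∀ x ∈ M, A.mulVec x ∈ M)
    (hM2 : ∀ x ∈ M, Aᴴ.mulVec x ∈ M) :
    M = ⊥ ∨ M = ⊤ := by
  have hn0 : 0 < n := by omega
  -- entrywise formula for A.mulVec
  have hAv : ∀ (x : Fin n → ℂ) (i : Fin n),
      A.mulVec x i = if h : (i : ℕ) + 1 < n then a i * x ⟨(i : ℕ) + 1, h⟩ else 0 := by
    intro x i
    rw [hA]
    unfold wsMatrix
    simp only [mulVec, dotProduct]
    by_cases h : (i : ℕ) + 1 < n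
    · rw [dif_pos h]
      rw [Finset.sum_eq_single (⟨(i : ℕ) + 1, h⟩ : Fin n)]
      · simp [Nat.mod_eq_of_lt h, h]
      · intro j _ hj
        have hne : (j : ℕ) ≠ ((i : ℕ) + 1) % n := by
          rw [Nat.mod_eq_of_lt h]
          intro hc; exact hj (Fin.ext hc)
        simp [hne]
      · simp
    · rw [dif_neg h]
      apply Finset.sum_eq_zero
      intro j _
      simp [h]
  -- entrywise formula for Aᴴ.mulVec, positive index
  have hAHv : ∀ (x : Fin n → ℂ) (i : Fin n) (h : 0 < (i : ℕ)),
      Aᴴ.mulVec x i =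
        (starRingEnd ℂ) (a ⟨(i : ℕ) - 1, by omega⟩) * x ⟨(i : ℕ) - 1, by omega⟩ := by
    intro x i h
    rw [hA]
    unfold wsMatrix
    simp only [mulVec, dotProduct]
    rw [Finset.sum_eq_single (⟨(i : ℕ) - 1, by omega⟩ : Fin n)]
    · have h1 : ((i : ℕ) - 1) + 1 = (i : ℕ) := by omega
      have h2 : ((i : ℕ) - 1) + 1 < n := by omega
      simp [conjTranspose, transpose, transpose_apply, map_apply, of_apply, h1, Nat.mod_eq_of_lt i.isLt, h2, i.isLt]
    · intro j _ hj
      simp only [conjTranspose, transpose, transpose_apply, map_apply, of_apply]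
      by_cases hjn : (j : ℕ) + 1 < n
      · have hne : (i : ℕ) ≠ ((j : ℕ) + 1) % n := by
          rw [Nat.mod_eq_of_lt hjn]
          intro hc
          apply hj
          apply Fin.ext
          simp
          omega
        simp [hne]
      · have hjn' : (j : ℕ) + 1 = n := by omega
        simp [hjn]
    · simp
  -- entrywise formula for Aᴴ.mulVec at index 0
  have hAH0 : ∀ (x : Fin n → ℂ), Aᴴ.mulVec x ⟨0, hn0⟩ = 0 := by
    intro x
    rw [hA]
    unfold wsMatrix
    simp only [mulVec, dotProduct]
    apply Finset.sum_eq_zero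
    intro j _
    simp only [conjTranspose, transpose, transpose_apply, map_apply, of_apply]
    by_cases hjn : (j : ℕ) + 1 < n
    · have hne : ((⟨0, hn0⟩ : Fin n) : ℕ) ≠ ((j : ℕ) + 1) % n := by
        rw [Nat.mod_eq_of_lt hjn]
        simp
      simp [hne]
    · simp [hjn]
  by_cases hbot : M = ⊥
  · exact Or.inl hbot
  right
  obtain ⟨x, hxM, hx⟩ := Submodule.exists_mem_ne_zero_of_ne_bot hbot
  obtain ⟨i, hxi⟩ := Function.ne_iff.mp hx
  simp only [Pi.zero_apply] at hxi
  -- Step 1: descend to a vector with nonzero 0-th entry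
  have claim1 : ∀ k : ℕ, k ≤ (i : ℕ) → ∃ y, y ∈ M ∧ y ⟨(i : ℕ) - k, by omega⟩ ≠ 0 := by
    intro k
    induction k with
    | zero =>
      intro _
      refine ⟨x, hxM, ?_⟩
      have : (⟨(i : ℕ) - 0, by omega⟩ : Fin n) = i := Fin.ext (by simp)
      rw [this]; exact hxi
    | succ k ih =>
      intro hk
      obtain ⟨y, hyM, hy⟩ := ih (by omega)
      refine ⟨A.mulVec y, hM1 y hyM, ?_⟩
      rw [hAv]
      have h1 : ((⟨(i : ℕ) - (k + 1), by omega⟩ : Fin n) : ℕ) + 1 < n := by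
        simp; omega
      rw [dif_pos h1]
      apply mul_ne_zero
      · apply ha
        simpa using h1
      · have : (⟨((⟨(i : ℕ) - (k + 1), by omega⟩ : Fin n) : ℕ) + 1, h1⟩ : Fin n)
            = ⟨(i : ℕ) - k, by omega⟩ := Fin.ext (by simp; omega)
        rw [this]; exact hy
  obtain ⟨y, hyM, hy0⟩ := claim1 (i : ℕ) (le_refl _)
  have hy0' : y ⟨0, hn0⟩ ≠ 0 := by
    have : (⟨(i : ℕ) - (i : ℕ), by omega⟩ : Fin n) = ⟨0, hn0⟩ := Fin.ext (by simp)
    rwa [this] at hy0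
  -- Step 2: climb to a multiple of e_{n-1}
  have claim2 : ∀ k : ℕ, ∀ _hk : k ≤ n - 1,
      ∃ z, z ∈ M ∧ (∀ j : Fin n, (j : ℕ) < k → z j = 0) ∧ z ⟨k, by omega⟩ ≠ 0 := by
    intro k
    induction k with
    | zero =>
      intro _
      exact ⟨y, hyM, fun j hj => absurd hj (by omega), hy0'⟩
    | succ k ih =>
      intro hk
      obtain ⟨z, hzM, hz0, hzk⟩ := ih (by omega)
      refine ⟨Aᴴ.mulVec z, hM2 z hzM, ?_, ?_⟩
      · intro j hj
        by_cases hj0 : (j : ℕ) = 0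
        · have : j = ⟨0, hn0⟩ := Fin.ext hj0
          rw [this]; exact hAH0 z
        · rw [hAHv z j (by omega)]
          rw [hz0 ⟨(j : ℕ) - 1, by omega⟩ (by simp; omega)]
          simp
      · rw [hAHv z ⟨k + 1, by omega⟩ (by simp)]
        apply mul_ne_zero
        · simp only [ne_eq, map_eq_zero]
          apply ha
          simp; omega
        · have : (⟨((⟨k + 1, by omega⟩ : Fin n) : ℕ) - 1, by omega⟩ : Fin n)
              = ⟨k, by omega⟩ := Fin.ext (by simp)
          rw [this]; exact hzk
  obtain ⟨z, hzM, hz0, hztop⟩ := claim2 (n - 1) (le_refl _)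
  -- z is a nonzero multiple of e_{n-1}
  have hzsingle : z = Pi.single (⟨n - 1, by omega⟩ : Fin n) (z ⟨n - 1, by omega⟩) := by
    funext j
    by_cases hj : (j : ℕ) < n - 1
    · rw [hz0 j hj]
      rw [Pi.single_apply]
      rw [if_neg]
      intro hc
      rw [hc] at hj
      simp at hj
    · have hjn := j.isLt
      have : j = ⟨n - 1, by omega⟩ := Fin.ext (by simp; omega)
      rw [this]
      simp
  -- Step 3: all scaled basis vectors are in M
  have claim3 : ∀ k : ℕ, k ≤ n - 1 →
      ∃ c : ℂ, c ≠ 0 ∧ Pi.single (⟨n - 1 - k, by omega⟩ : Fin n) c ∈ M := by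
    intro k
    induction k with
    | zero =>
      intro _
      refine ⟨z ⟨n - 1, by omega⟩, hztop, ?_⟩
      have : (⟨n - 1 - 0, by omega⟩ : Fin n) = ⟨n - 1, by omega⟩ := Fin.ext (by simp)
      rw [this, ← hzsingle]; exact hzM
    | succ k ih =>
      intro hk
      obtain ⟨c, hc, hcM⟩ := ih (by omega)
      refine ⟨a ⟨n - 1 - (k + 1), by omega⟩ * c, ?_, ?_⟩
      · apply mul_ne_zero _ hc
        apply ha
        simp; omega
      · have hAsingle : A.mulVec (Pi.single (⟨n - 1 - k, by omega⟩ : Fin n) c)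
            = Pi.single (⟨n - 1 - (k + 1), by omega⟩ : Fin n)
                (a ⟨n - 1 - (k + 1), by omega⟩ * c) := by
          funext j
          rw [hAv]
          by_cases hj : (j : ℕ) + 1 < n
          · rw [dif_pos hj]
            by_cases hjk : (j : ℕ) = n - 1 - (k + 1)
            · have e1 : (⟨(j : ℕ) + 1, hj⟩ : Fin n) = ⟨n - 1 - k, by omega⟩ :=
                Fin.ext (by simp; omega)
              have e2 : j = ⟨n - 1 - (k + 1), by omega⟩ := Fin.ext hjk
              rw [e1, e2]
              simp
            · have e1 : (⟨(j : ℕ) + 1, hj⟩ : Fin n) ≠ ⟨n - 1 - k, by omega⟩ := by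
                intro hc'
                apply hjk
                have := Fin.mk.injEq .. ▸ hc'
                simp at hc'
                omega
              have e2 : j ≠ ⟨n - 1 - (k + 1), by omega⟩ := by
                intro hc'
                apply hjk
                rw [hc']
              rw [Pi.single_apply, if_neg e1, Pi.single_apply, if_neg e2]
              simp
          · rw [dif_neg hj]
            have e2 : j ≠ ⟨n - 1 - (k + 1), by omega⟩ := by
              intro hc'
              rw [hc'] at hj
              simp at hj
              omega
            rw [Pi.single_apply, if_neg e2]
        rw [← hAsingle]
        exact hM1 _ hcM
  -- every scaled basis vector in M, for arbitrary index
  have hbasis : ∀ (m : Fin n) (c : ℂ), Pi.single m c ∈ M := by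
    intro m c
    obtain ⟨d, hd, hdM⟩ := claim3 (n - 1 - (m : ℕ)) (by omega)
    have hm : (⟨n - 1 - (n - 1 - (m : ℕ)), by omega⟩ : Fin n) = m :=
      Fin.ext (by simp; omega)
    rw [hm] at hdM
    have : Pi.single m c = (c * d⁻¹) • (Pi.single m d : Fin n → ℂ) := by
      rw [← Pi.single_smul]
      field_simp
      rw [smul_eq_mul, div_mul_cancel₀ _ hd]
    rw [this]
    exact M.smul_mem _ hdM
  -- conclude M = ⊤
  rw [Submodule.eq_top_iff']
  intro v
  have : v = ∑ j : Fin n, Pi.single j (v j) := by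
    rw [Finset.univ_sum_single]
  rw [this]
  exact Submodule.sum_mem M fun j _ => hbasis j (v j)
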